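/- There exists a random variable Y and a partial compatibility structure under which partial compatibility does not imply joint partial compatibility. Concretely: let ζ1,…,ζ4 be i.i.d. with P(ζi = 1) = P(ζi = −1) = 1/2, set Y = (ζ1ζ2, ζ2ζ3, ζ3ζ4, ζ4ζ1), F^Y = σ(Y1), and for ξ uniform on [0,1] independent of Y set X = G(Y,ξ) = 1_{ξ<1/2}Y2 + 1_{ξ≥1/2}Y3 and h0(Y) = Y4. Then E[h0(Y) | σ(Y1) ∨ σ(X)] = 0 = E[h0(Y) | σ(Y1)], so X is partially compatible with Y for H = {h0}; but for independent uniforms ξ1, ξ2 and X1 = G(Y,ξ1), X2 = G(Y,ξ2), E[h0(Y) | σ(Y1) ∨ σ(X1) ∨ σ(X2)] = 1_{X1≠X2} Y1 X1 X2 + (1/3) 1_{X1=X2} Y1, which is not a.s. equal to 0, so joint partial compatibility fails. -/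

import Mathlib

open MeasureTheory ProbabilityTheory MeasurableSpace
open scoped ENNReal

/-- The Rademacher law on `ℝ`: `P(1) = P(-1) = 1/2`. -/
noncomputable def rademacher : Measure ℝ :=
  (1/2 : ℝ≥0∞) • Measure.dirac (1:ℝ) + (1/2 : ℝ≥0∞) • Measure.dirac (-1:ℝ)

/-- The uniform law on `[0,1]`. -/
noncomputable def unif01 : Measure ℝ := volume.restrict (Set.Icc (0:ℝ) 1)


open scoped Classical
set_option maxHeartbeats 4000000

namespace Kurtz31

noncomputable def μB : Measure Bool :=
  (1/2 : ℝ≥0∞) • Measure.dirac true + (1/2 : ℝ≥0∞) • Measure.dirac false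

lemma half_half : (2⁻¹ : ℝ≥0∞) + 2⁻¹ = 1 := by
  rw [← one_div, ENNReal.add_halves]

instance : IsProbabilityMeasure rademacher := ⟨by simp [rademacher, half_half]⟩
instance : IsProbabilityMeasure unif01 := ⟨by simp [unif01, Real.volume_Icc]⟩
instance : IsProbabilityMeasure μB := ⟨by simp [μB, half_half]⟩

abbrev Ω6 : Type := ℝ × ℝ × ℝ × ℝ × ℝ × ℝ
abbrev B6 : Type := Bool × Bool × Bool × Bool × Bool × Bool
abbrev R4 : Type := ℝ × ℝ × ℝ × ℝ

noncomputable def P6 : Measure Ω6 :=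
  rademacher.prod (rademacher.prod (rademacher.prod (rademacher.prod (unif01.prod unif01))))

noncomputable def PB : Measure B6 :=
  μB.prod (μB.prod (μB.prod (μB.prod (μB.prod μB))))

instance : IsProbabilityMeasure P6 := by unfold P6; infer_instance
instance : IsProbabilityMeasure PB := by unfold PB; infer_instance

noncomputable def dR (t : ℝ) : Bool := decide (0 < t)
noncomputable def dU (t : ℝ) : Bool := decide (t < 1/2)
noncomputable def rB (b : Bool) : ℝ := if b then 1 else -1

lemma measurable_dR : Measurable dR := by
  apply measurable_to_bool
  have : dR ⁻¹' {true} = Set.Ioi (0:ℝ) := by ext t; simp [dR]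
  rw [this]; exact measurableSet_Ioi

lemma measurable_dU : Measurable dU := by
  apply measurable_to_bool
  have : dU ⁻¹' {true} = Set.Iio (1/2 : ℝ) := by ext t; simp [dU]
  rw [this]; exact measurableSet_Iio

lemma measurable_rB : Measurable rB := measurable_from_top

lemma map_dR : rademacher.map dR = μB := by
  rw [rademacher, Measure.map_add _ _ measurable_dR, Measure.map_smul, Measure.map_smul,
    Measure.map_dirac' measurable_dR, Measure.map_dirac' measurable_dR]
  have h1 : dR 1 = true := by simp [dR]
  have h2 : dR (-1) = false := by simp [dR]
  rw [h1, h2, μB]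

lemma unif01_apply (s : Set ℝ) : unif01 s = volume (s ∩ Set.Icc 0 1) := by
  rw [unif01, Measure.restrict_apply']; exact measurableSet_Icc

lemma ofReal_half : ENNReal.ofReal (1/2 : ℝ) = 1/2 := by
  rw [ENNReal.ofReal_div_of_pos (by norm_num), ENNReal.ofReal_one, ENNReal.ofReal_ofNat]

lemma map_dU : unif01.map dU = μB := by
  ext s hs
  classical
  rw [Measure.map_apply measurable_dU hs]
  have hμB : μB s = (if true ∈ s then (2⁻¹:ℝ≥0∞) else 0) + (if false ∈ s then (2⁻¹:ℝ≥0∞) else 0) := by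
    simp [μB, Measure.dirac_apply' _ hs, Set.indicator_apply, one_div]
  by_cases ht : true ∈ s <;> by_cases hf : false ∈ s
  · have hpre : dU ⁻¹' s = Set.univ := by
      ext t; simp only [Set.mem_preimage, Set.mem_univ, iff_true]
      cases h : dU t
      · exact hf
      · exact ht
    rw [hpre, hμB, if_pos ht, if_pos hf, half_half]
    exact measure_univ
  · have hpre : dU ⁻¹' s = Set.Iio (1/2 : ℝ) := by
      ext t
      simp only [Set.mem_preimage, Set.mem_Iio]
      constructor
      · intro h
        by_contra hc
        have hd : dU t = false := by
          simp only [dU, decide_eq_false_iff_not]; exact hc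
        rw [hd] at h; exact hf h
      · intro h
        have hd : dU t = true := by
          simp only [dU, decide_eq_true_eq]; exact h
        rw [hd]; exact ht
    rw [hpre, hμB, if_pos ht, if_neg hf, unif01_apply]
    have : Set.Iio (1/2:ℝ) ∩ Set.Icc 0 1 = Set.Ico 0 (1/2) := by
      ext t; simp only [Set.mem_inter_iff, Set.mem_Iio, Set.mem_Icc, Set.mem_Ico]
      constructor
      · rintro ⟨h1, h2, h3⟩; exact ⟨h2, h1⟩
      · rintro ⟨h1, h2⟩; exact ⟨h2, h1, by linarith⟩
    rw [this, Real.volume_Ico, add_zero]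
    rw [show (1/2 - 0 : ℝ) = 1/2 by norm_num, ofReal_half, one_div]
  · have hpre : dU ⁻¹' s = Set.Ici (1/2 : ℝ) := by
      ext t
      simp only [Set.mem_preimage, Set.mem_Ici]
      constructor
      · intro h
        by_contra hc
        push_neg at hc
        have hd : dU t = true := by
          simp only [dU, decide_eq_true_eq]; exact hc
        rw [hd] at h; exact ht h
      · intro h
        have hd : dU t = false := by
          simp only [dU, decide_eq_false_iff_not]; exact not_lt.mpr h
        rw [hd]; exact hf
    rw [hpre, hμB, if_neg ht, if_pos hf, unif01_apply]
    have : Set.Ici (1/2:ℝ) ∩ Set.Icc 0 1 = Set.Icc (1/2) 1 := by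
      ext t; simp only [Set.mem_inter_iff, Set.mem_Ici, Set.mem_Icc]
      constructor
      · rintro ⟨h1, h2, h3⟩; exact ⟨h1, h3⟩
      · rintro ⟨h1, h2⟩; exact ⟨h1, by linarith, h2⟩
    rw [this, Real.volume_Icc, zero_add]
    rw [show (1 - 1/2 : ℝ) = 1/2 by norm_num, ofReal_half, one_div]
  · have hpre : dU ⁻¹' s = ∅ := by
      ext t; simp only [Set.mem_preimage, Set.mem_empty_iff_false, iff_false]
      intro h
      cases hdu : dU t
      · rw [hdu] at h; exact hf h
      · rw [hdu] at h; exact ht h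
    rw [hpre, hμB, if_neg ht, if_neg hf, add_zero]
    exact measure_empty

/-- The discretization map. -/
noncomputable def U : Ω6 → B6 :=
  Prod.map dR (Prod.map dR (Prod.map dR (Prod.map dR (Prod.map dU dU))))

lemma measurable_U : Measurable U := by
  unfold U
  exact (measurable_dR.prodMap (measurable_dR.prodMap
    (measurable_dR.prodMap (measurable_dR.prodMap (measurable_dU.prodMap measurable_dU)))))

lemma map_U : P6.map U = PB := by
  have h5 : (unif01.prod unif01).map (Prod.map dU dU) = μB.prod μB := by
    rw [← Measure.map_prod_map _ _ measurable_dU measurable_dU, map_dU]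
  have m5 : Measurable (Prod.map dU dU) := measurable_dU.prodMap measurable_dU
  have h4 : (rademacher.prod (unif01.prod unif01)).map (Prod.map dR (Prod.map dU dU))
      = μB.prod (μB.prod μB) := by
    rw [← Measure.map_prod_map _ _ measurable_dR m5, map_dR, h5]
  have m4 : Measurable (Prod.map dR (Prod.map dU dU)) := measurable_dR.prodMap m5
  have h3 : (rademacher.prod (rademacher.prod (unif01.prod unif01))).map
      (Prod.map dR (Prod.map dR (Prod.map dU dU))) = μB.prod (μB.prod (μB.prod μB)) := by
    rw [← Measure.map_prod_map _ _ measurable_dR m4, map_dR, h4]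
  have m3 : Measurable (Prod.map dR (Prod.map dR (Prod.map dU dU))) := measurable_dR.prodMap m4
  have h2 : (rademacher.prod (rademacher.prod (rademacher.prod (unif01.prod unif01)))).map
      (Prod.map dR (Prod.map dR (Prod.map dR (Prod.map dU dU))))
      = μB.prod (μB.prod (μB.prod (μB.prod μB))) := by
    rw [← Measure.map_prod_map _ _ measurable_dR m3, map_dR, h3]
  have m2 : Measurable (Prod.map dR (Prod.map dR (Prod.map dR (Prod.map dU dU)))) :=
    measurable_dR.prodMap m3
  show (rademacher.prod (rademacher.prod (rademacher.prod (rademacher.prod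
      (unif01.prod unif01))))).map
      (Prod.map dR (Prod.map dR (Prod.map dR (Prod.map dR (Prod.map dU dU))))) = PB
  rw [← Measure.map_prod_map _ _ measurable_dR m2, map_dR, h2, PB]


noncomputable def Y1f : Ω6 → ℝ := fun ω => ω.1 * ω.2.1
noncomputable def Y2f : Ω6 → ℝ := fun ω => ω.2.1 * ω.2.2.1
noncomputable def Y3f : Ω6 → ℝ := fun ω => ω.2.2.1 * ω.2.2.2.1
noncomputable def Y4f : Ω6 → ℝ := fun ω => ω.2.2.2.1 * ω.1
noncomputable def X1f : Ω6 → ℝ := fun ω => if ω.2.2.2.2.1 < 1/2 then Y2f ω else Y3f ω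
noncomputable def X2f : Ω6 → ℝ := fun ω => if ω.2.2.2.2.2 < 1/2 then Y2f ω else Y3f ω

noncomputable def W : Ω6 → R4 := fun ω => (Y1f ω, X1f ω, X2f ω, Y4f ω)

noncomputable def pts : B6 → R4 := fun b =>
  (rB b.1 * rB b.2.1,
   (if b.2.2.2.2.1 then rB b.2.1 * rB b.2.2.1 else rB b.2.2.1 * rB b.2.2.2.1),
   (if b.2.2.2.2.2 then rB b.2.1 * rB b.2.2.1 else rB b.2.2.1 * rB b.2.2.2.1),
   rB b.2.2.2.1 * rB b.1)


lemma mz1 : Measurable fun ω : Ω6 => ω.1 := measurable_fst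
lemma mz2 : Measurable fun ω : Ω6 => ω.2.1 := measurable_fst.comp measurable_snd
lemma mz3 : Measurable fun ω : Ω6 => ω.2.2.1 :=
  measurable_fst.comp (measurable_snd.comp measurable_snd)
lemma mz4 : Measurable fun ω : Ω6 => ω.2.2.2.1 :=
  measurable_fst.comp (measurable_snd.comp (measurable_snd.comp measurable_snd))
lemma mz5 : Measurable fun ω : Ω6 => ω.2.2.2.2.1 :=
  measurable_fst.comp (measurable_snd.comp (measurable_snd.comp (measurable_snd.comp
    measurable_snd)))
lemma mz6 : Measurable fun ω : Ω6 => ω.2.2.2.2.2 :=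
  measurable_snd.comp (measurable_snd.comp (measurable_snd.comp (measurable_snd.comp
    measurable_snd)))

lemma measurable_Y1f : Measurable Y1f := mz1.mul mz2
lemma measurable_Y2f : Measurable Y2f := mz2.mul mz3
lemma measurable_Y3f : Measurable Y3f := mz3.mul mz4
lemma measurable_Y4f : Measurable Y4f := mz4.mul mz1
lemma measurable_X1f : Measurable X1f :=
  Measurable.ite (measurableSet_lt mz5 measurable_const) measurable_Y2f measurable_Y3f
lemma measurable_X2f : Measurable X2f :=
  Measurable.ite (measurableSet_lt mz6 measurable_const) measurable_Y2f measurable_Y3f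
lemma measurable_W : Measurable W :=
  measurable_Y1f.prodMk (measurable_X1f.prodMk (measurable_X2f.prodMk measurable_Y4f))
lemma measurable_pts : Measurable pts := measurable_of_countable _

lemma rad_ae : ∀ᵐ x ∂rademacher, x = 1 ∨ x = -1 := by
  rw [ae_iff]
  have hsub : {x : ℝ | ¬(x = 1 ∨ x = -1)} ⊆ ({1, -1} : Set ℝ)ᶜ := by
    intro x hx
    simp only [Set.mem_compl_iff, Set.mem_insert_iff, Set.mem_singleton_iff]
    exact hx
  refine measure_mono_null hsub ?_
  have hms : MeasurableSet (({1, -1} : Set ℝ)ᶜ) :=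
    (Set.Finite.measurableSet (by simp : ({1, -1} : Set ℝ).Finite)).compl
  rw [rademacher]
  simp [Measure.dirac_apply' _ hms, Set.indicator_apply]

lemma ae_fst {α β : Type*} [MeasurableSpace α] [MeasurableSpace β]
    (μ : Measure α) (ν : Measure β) [SFinite μ] [SFinite ν]
    {p : α → Prop} (hp : ∀ᵐ x ∂μ, p x) : ∀ᵐ z ∂(μ.prod ν), p z.1 := by
  rw [ae_iff] at hp ⊢
  have : {z : α × β | ¬ p z.1} = {x | ¬ p x} ×ˢ Set.univ := by
    ext z; simp [Set.mem_prod]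
  rw [this, Measure.prod_prod, hp, zero_mul]

lemma ae_snd {α β : Type*} [MeasurableSpace α] [MeasurableSpace β]
    (μ : Measure α) (ν : Measure β) [SFinite μ] [SFinite ν]
    {p : β → Prop} (hp : ∀ᵐ y ∂ν, p y) : ∀ᵐ z ∂(μ.prod ν), p z.2 := by
  rw [ae_iff] at hp ⊢
  have : {z : α × β | ¬ p z.2} = Set.univ ×ˢ {y | ¬ p y} := by
    ext z; simp [Set.mem_prod]
  rw [this, Measure.prod_prod, hp, mul_zero]

lemma ae_good : ∀ᵐ ω ∂P6, (ω.1 = 1 ∨ ω.1 = -1) ∧ (ω.2.1 = 1 ∨ ω.2.1 = -1)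
    ∧ (ω.2.2.1 = 1 ∨ ω.2.2.1 = -1) ∧ (ω.2.2.2.1 = 1 ∨ ω.2.2.2.1 = -1) := by
  have h1 : ∀ᵐ ω ∂P6, ω.1 = 1 ∨ ω.1 = -1 := ae_fst _ _ rad_ae
  have h2 : ∀ᵐ ω ∂P6, ω.2.1 = 1 ∨ ω.2.1 = -1 := ae_snd _ _ (ae_fst _ _ rad_ae)
  have h3 : ∀ᵐ ω ∂P6, ω.2.2.1 = 1 ∨ ω.2.2.1 = -1 :=
    ae_snd _ _ (ae_snd _ _ (ae_fst _ _ rad_ae))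
  have h4 : ∀ᵐ ω ∂P6, ω.2.2.2.1 = 1 ∨ ω.2.2.2.1 = -1 :=
    ae_snd _ _ (ae_snd _ _ (ae_snd _ _ (ae_fst _ _ rad_ae)))
  filter_upwards [h1, h2, h3, h4] with ω a b c d
  exact ⟨a, b, c, d⟩

lemma dR_one : dR 1 = true := by simp [dR]
lemma dR_neg_one : dR (-1) = false := by simp [dR]

lemma W_ae : W =ᵐ[P6] fun ω => pts (U ω) := by
  filter_upwards [ae_good] with ω h
  obtain ⟨h1, h2, h3, h4⟩ := h
  rcases ω with ⟨a, b, c, d, t1, t2⟩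
  simp only at h1 h2 h3 h4
  have hU : U (a, b, c, d, t1, t2) = (dR a, dR b, dR c, dR d, dU t1, dU t2) := rfl
  rw [hU]
  show (Y1f _, X1f _, X2f _, Y4f _) = _
  have e1 : rB (dR a) = a := by rcases h1 with h | h <;> simp [h, dR_one, dR_neg_one, rB]
  have e2 : rB (dR b) = b := by rcases h2 with h | h <;> simp [h, dR_one, dR_neg_one, rB]
  have e3 : rB (dR c) = c := by rcases h3 with h | h <;> simp [h, dR_one, dR_neg_one, rB]
  have e4 : rB (dR d) = d := by rcases h4 with h | h <;> simp [h, dR_one, dR_neg_one, rB]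
  have hx1 : X1f (a, b, c, d, t1, t2)
      = (if dU t1 then rB (dR b) * rB (dR c) else rB (dR c) * rB (dR d)) := by
    by_cases ht : t1 < 1/2
    · have hd : dU t1 = true := by simp only [dU, decide_eq_true_eq]; exact ht
      rw [hd, if_pos rfl]
      show (if t1 < 1/2 then Y2f (a, b, c, d, t1, t2) else Y3f (a, b, c, d, t1, t2)) = _
      rw [if_pos ht, e2, e3]; rfl
    · have hd : dU t1 = false := by simp only [dU, decide_eq_false_iff_not]; exact ht
      rw [hd, if_neg (by simp)]
      show (if t1 < 1/2 then Y2f (a, b, c, d, t1, t2) else Y3f (a, b, c, d, t1, t2)) = _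
      rw [if_neg ht, e3, e4]; rfl
  have hx2 : X2f (a, b, c, d, t1, t2)
      = (if dU t2 then rB (dR b) * rB (dR c) else rB (dR c) * rB (dR d)) := by
    by_cases ht : t2 < 1/2
    · have hd : dU t2 = true := by simp only [dU, decide_eq_true_eq]; exact ht
      rw [hd, if_pos rfl]
      show (if t2 < 1/2 then Y2f (a, b, c, d, t1, t2) else Y3f (a, b, c, d, t1, t2)) = _
      rw [if_pos ht, e2, e3]; rfl
    · have hd : dU t2 = false := by simp only [dU, decide_eq_false_iff_not]; exact ht
      rw [hd, if_neg (by simp)]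
      show (if t2 < 1/2 then Y2f (a, b, c, d, t1, t2) else Y3f (a, b, c, d, t1, t2)) = _
      rw [if_neg ht, e3, e4]; rfl
  refine Prod.ext ?_ (Prod.ext ?_ (Prod.ext ?_ ?_))
  · show Y1f _ = rB (dR a) * rB (dR b); rw [e1, e2]; rfl
  · exact hx1
  · exact hx2
  · show Y4f _ = rB (dR d) * rB (dR a); rw [e1, e4]; rfl

lemma map_W : P6.map W = PB.map pts := by
  rw [Measure.map_congr W_ae,
    show (fun ω => pts (U ω)) = pts ∘ U from rfl,
    ← Measure.map_map measurable_pts measurable_U, map_U]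



lemma μB_single (x : Bool) : μB {x} = 2⁻¹ := by
  cases x <;>
    simp [μB, Measure.dirac_apply' _ (MeasurableSet.singleton _), Set.indicator_apply]

lemma PB_single (b : B6) : PB {b} = 2⁻¹ * (2⁻¹ * (2⁻¹ * (2⁻¹ * (2⁻¹ * 2⁻¹)))) := by
  obtain ⟨b1, b2, b3, b4, b5, b6⟩ := b
  have : ({(b1, b2, b3, b4, b5, b6)} : Set B6)
      = {b1} ×ˢ ({b2} ×ˢ ({b3} ×ˢ ({b4} ×ˢ ({b5} ×ˢ ({b6} : Set Bool))))) := by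
    simp [Set.singleton_prod_singleton]
  rw [PB, this, Measure.prod_prod, Measure.prod_prod, Measure.prod_prod, Measure.prod_prod,
    Measure.prod_prod, μB_single, μB_single, μB_single, μB_single, μB_single, μB_single]

lemma PB_single_toReal (b : B6) : (PB {b}).toReal = 1/64 := by
  rw [PB_single]
  rw [ENNReal.toReal_mul, ENNReal.toReal_mul, ENNReal.toReal_mul, ENNReal.toReal_mul,
    ENNReal.toReal_mul]
  norm_num

lemma setint (φ : R4 → ℝ) (hφ : Measurable φ) (A : Set R4) (hA : MeasurableSet A) :
    ∫ ω in W ⁻¹' A, φ (W ω) ∂P6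
      = ∑ b : B6, (1/64 : ℝ) * (if pts b ∈ A then φ (pts b) else 0) := by
  classical
  rw [← setIntegral_map hA hφ.aestronglyMeasurable measurable_W.aemeasurable, map_W,
    setIntegral_map hA hφ.aestronglyMeasurable measurable_pts.aemeasurable,
    ← integral_indicator (measurable_pts hA)]
  rw [integral_fintype (Integrable.of_finite)]
  refine Finset.sum_congr rfl fun b _ => ?_
  rw [measureReal_def, PB_single_toReal, smul_eq_mul, Set.indicator_apply]
  simp [Set.mem_preimage]

lemma comap_pair {α β γ : Type*} [mβ : MeasurableSpace β] [mγ : MeasurableSpace γ]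
    (f : α → β) (g : α → γ) :
    MeasurableSpace.comap (fun a => (f a, g a)) inferInstance
      = MeasurableSpace.comap f inferInstance ⊔ MeasurableSpace.comap g inferInstance := by
  show MeasurableSpace.comap (fun a => (f a, g a)) (mβ.comap Prod.fst ⊔ mγ.comap Prod.snd) = _
  rw [MeasurableSpace.comap_sup, MeasurableSpace.comap_comp, MeasurableSpace.comap_comp]
  rfl

lemma measurable_comap {α γ : Type*} [mγ : MeasurableSpace γ] (T : α → γ) :
    Measurable[MeasurableSpace.comap T mγ] T :=
  Measurable.of_comap_le le_rfl


/-- the key generic conditional-expectation computation -/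
lemma cond_key {γ : Type*} [mγ : MeasurableSpace γ]
    (T : Ω6 → γ) (hT : Measurable T) (π : R4 → γ) (hπ : Measurable π)
    (hTW : ∀ ω, T ω = π (W ω)) (ψ : γ → ℝ) (hψ : Measurable ψ)
    (key : ∀ B : Set γ, MeasurableSet B →
      (∑ b : B6, (1/64 : ℝ) * (if pts b ∈ π ⁻¹' B then ψ (π (pts b)) else 0))
        = ∑ b : B6, (1/64 : ℝ) * (if pts b ∈ π ⁻¹' B then (pts b).2.2.2 else 0)) :
    P6[Y4f | MeasurableSpace.comap T mγ] =ᵐ[P6] fun ω => ψ (T ω) := by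
  have hm : MeasurableSpace.comap T mγ ≤ (inferInstance : MeasurableSpace Ω6) := hT.comap_le
  haveI : IsFiniteMeasure (P6.trim hm) := isFiniteMeasure_trim hm
  haveI : SigmaFinite (P6.trim hm) := inferInstance
  have hY4W : Y4f = fun ω => (W ω).2.2.2 := rfl
  have hfint : Integrable Y4f P6 := by
    rw [hY4W]
    have h1 : Integrable (fun p : R4 => p.2.2.2) (P6.map W) := by
      rw [map_W]
      exact (integrable_map_measure
        (measurable_snd.comp (measurable_snd.comp measurable_snd)).aestronglyMeasurable
        measurable_pts.aemeasurable).mpr (Integrable.of_finite)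
    exact (integrable_map_measure
      (measurable_snd.comp (measurable_snd.comp measurable_snd)).aestronglyMeasurable
      measurable_W.aemeasurable).mp h1
  have hgW : (fun ω => ψ (T ω)) = fun ω => (ψ ∘ π) (W ω) := by
    funext ω; simp [hTW ω]
  have hgint : Integrable (fun ω => ψ (T ω)) P6 := by
    rw [hgW]
    have h1 : Integrable (ψ ∘ π) (P6.map W) := by
      rw [map_W]
      exact (integrable_map_measure (hψ.comp hπ).aestronglyMeasurable
        measurable_pts.aemeasurable).mpr (Integrable.of_finite)
    exact (integrable_map_measure (hψ.comp hπ).aestronglyMeasurable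
      measurable_W.aemeasurable).mp h1
  refine (ae_eq_condExp_of_forall_setIntegral_eq hm hfint
    (fun s _ _ => hgint.integrableOn) (fun s hs _ => ?_) ?_).symm
  · obtain ⟨B, hB, rfl⟩ := hs
    have hset : T ⁻¹' B = W ⁻¹' (π ⁻¹' B) := by
      ext ω; simp [Set.mem_preimage, hTW ω]
    calc ∫ ω in T ⁻¹' B, ψ (T ω) ∂P6
        = ∫ ω in W ⁻¹' (π ⁻¹' B), (ψ ∘ π) (W ω) ∂P6 := by
          rw [← hset]
          exact setIntegral_congr_fun (hT hB) (fun ω _ => by simp [hTW ω])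
      _ = ∑ b : B6, (1/64 : ℝ) * (if pts b ∈ π ⁻¹' B then ψ (π (pts b)) else 0) :=
          setint (ψ ∘ π) (hψ.comp hπ) _ (hπ hB)
      _ = ∑ b : B6, (1/64 : ℝ) * (if pts b ∈ π ⁻¹' B then (pts b).2.2.2 else 0) := key B hB
      _ = ∫ ω in W ⁻¹' (π ⁻¹' B), (W ω).2.2.2 ∂P6 :=
          (setint (fun p => p.2.2.2)
            (measurable_snd.comp (measurable_snd.comp measurable_snd)) _ (hπ hB)).symm
      _ = ∫ ω in T ⁻¹' B, Y4f ω ∂P6 := by rw [← hset]; rfl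
  · exact StronglyMeasurable.aestronglyMeasurable ((hψ.comp (measurable_comap T)).stronglyMeasurable)
lemma sum_ite_mem {γ : Type*} [DecidableEq γ] (F : B6 → ℝ) (g : B6 → γ)
    (h : ∀ v : γ, ∑ b : B6, (if g b = v then F b else 0) = 0) (B : Set γ) :
    ∑ b : B6, (if g b ∈ B then F b else 0) = 0 := by
  classical
  have key : ∀ b : B6, (if g b ∈ B then F b else 0)
      = ∑ v ∈ Finset.univ.image g, (if g b = v then (if v ∈ B then F b else 0) else 0) := by
    intro b
    rw [Finset.sum_ite_eq (Finset.univ.image g) (g b)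
      (fun v => if v ∈ B then F b else 0),
      if_pos (Finset.mem_image_of_mem g (Finset.mem_univ b))]
  calc ∑ b : B6, (if g b ∈ B then F b else 0)
      = ∑ b : B6, ∑ v ∈ Finset.univ.image g,
          (if g b = v then (if v ∈ B then F b else 0) else 0) :=
        Finset.sum_congr rfl (fun b _ => key b)
    _ = ∑ v ∈ Finset.univ.image g, ∑ b : B6,
          (if g b = v then (if v ∈ B then F b else 0) else 0) := Finset.sum_comm
    _ = 0 := by
        refine Finset.sum_eq_zero (fun v _ => ?_)
        by_cases hv : v ∈ B
        · simp only [if_pos hv]; exact h v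
        · simp [hv]

lemma key_of_fibers {γ : Type*} [MeasurableSpace γ] [DecidableEq γ] (π : R4 → γ) (ψ : γ → ℝ)
    (h : ∀ v : γ, ∑ b : B6,
        (if π (pts b) = v then (ψ (π (pts b)) - (pts b).2.2.2) else 0) = 0) :
    ∀ B : Set γ, MeasurableSet B →
      (∑ b : B6, (1/64 : ℝ) * (if pts b ∈ π ⁻¹' B then ψ (π (pts b)) else 0))
        = ∑ b : B6, (1/64 : ℝ) * (if pts b ∈ π ⁻¹' B then (pts b).2.2.2 else 0) := by
  intro B _
  rw [← sub_eq_zero, ← Finset.sum_sub_distrib]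
  have hterm : ∀ b : B6,
      (1/64 : ℝ) * (if pts b ∈ π ⁻¹' B then ψ (π (pts b)) else 0)
        - (1/64 : ℝ) * (if pts b ∈ π ⁻¹' B then (pts b).2.2.2 else 0)
      = (1/64 : ℝ) * (if π (pts b) ∈ B then (ψ (π (pts b)) - (pts b).2.2.2) else 0) := by
    intro b
    by_cases hb : pts b ∈ π ⁻¹' B
    · rw [if_pos hb, if_pos hb, if_pos (Set.mem_preimage.mp hb)]; ring
    · rw [if_neg hb, if_neg hb, if_neg (fun hc => hb (Set.mem_preimage.mpr hc))]; ring
  rw [Finset.sum_congr rfl (fun b _ => hterm b), ← Finset.mul_sum,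
    sum_ite_mem _ (fun b => π (pts b)) h B, mul_zero]

lemma fiber2 : ∀ v : ℝ, ∑ b : B6,
    (if (pts b).1 = v then ((0:ℝ) - (pts b).2.2.2) else 0) = 0 := by
  intro v
  simp only [Fintype.sum_prod_type, Fintype.sum_bool]
  norm_num [pts, rB]
  by_cases h1 : (1:ℝ) = v
  · subst h1; norm_num
  · by_cases h2 : (-1:ℝ) = v
    · subst h2; norm_num
    · simp [h1, h2]

noncomputable def ψ3 : (ℝ × ℝ) × ℝ → ℝ :=
  fun q => if q.1.2 ≠ q.2 then q.1.1 * q.1.2 * q.2 else (1/3) * q.1.1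

lemma fiber1 : ∀ v : ℝ × ℝ, ∑ b : B6,
    (if ((pts b).1, (pts b).2.1) = v then ((0:ℝ) - (pts b).2.2.2) else 0) = 0 := by
  intro v
  simp only [Fintype.sum_prod_type, Fintype.sum_bool]
  norm_num [pts, rB]
  by_cases h1 : ((1:ℝ), (1:ℝ)) = v
  · subst h1; norm_num [Prod.ext_iff]
  by_cases h2 : ((1:ℝ), (-1:ℝ)) = v
  · subst h2; norm_num [Prod.ext_iff]
  by_cases h3 : ((-1:ℝ), (1:ℝ)) = v
  · subst h3; norm_num [Prod.ext_iff]
  by_cases h4 : ((-1:ℝ), (-1:ℝ)) = v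
  · subst h4; norm_num [Prod.ext_iff]
  · split_ifs <;> norm_num

lemma fiber3 : ∀ v : (ℝ × ℝ) × ℝ, ∑ b : B6,
    (if (((pts b).1, (pts b).2.1), (pts b).2.2.1) = v
      then (ψ3 (((pts b).1, (pts b).2.1), (pts b).2.2.1) - (pts b).2.2.2) else 0) = 0 := by
  intro v
  simp only [Fintype.sum_prod_type, Fintype.sum_bool]
  norm_num [pts, rB, ψ3]
  by_cases h1 : (((1:ℝ), (1:ℝ)), (1:ℝ)) = v
  · subst h1; norm_num [Prod.ext_iff]
  by_cases h2 : (((1:ℝ), (1:ℝ)), (-1:ℝ)) = v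
  · subst h2; norm_num [Prod.ext_iff]
  by_cases h3 : (((1:ℝ), (-1:ℝ)), (1:ℝ)) = v
  · subst h3; norm_num [Prod.ext_iff]
  by_cases h4 : (((1:ℝ), (-1:ℝ)), (-1:ℝ)) = v
  · subst h4; norm_num [Prod.ext_iff]
  by_cases h5 : (((-1:ℝ), (1:ℝ)), (1:ℝ)) = v
  · subst h5; norm_num [Prod.ext_iff]
  by_cases h6 : (((-1:ℝ), (1:ℝ)), (-1:ℝ)) = v
  · subst h6; norm_num [Prod.ext_iff]
  by_cases h7 : (((-1:ℝ), (-1:ℝ)), (1:ℝ)) = v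
  · subst h7; norm_num [Prod.ext_iff]
  by_cases h8 : (((-1:ℝ), (-1:ℝ)), (-1:ℝ)) = v
  · subst h8; norm_num [Prod.ext_iff]
  · split_ifs <;> norm_num


lemma cond1 : P6[Y4f | MeasurableSpace.comap Y1f inferInstance] =ᵐ[P6] fun _ => (0:ℝ) := by
  have h := cond_key Y1f measurable_Y1f (fun p => p.1) measurable_fst (fun ω => rfl)
    (fun _ => (0:ℝ)) measurable_const
    (key_of_fibers (fun p => p.1) (fun _ => (0:ℝ)) fiber2)
  exact h

lemma cond2 : P6[Y4f | MeasurableSpace.comap Y1f inferInstance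
    ⊔ MeasurableSpace.comap X1f inferInstance] =ᵐ[P6] fun _ => (0:ℝ) := by
  have h := cond_key (fun ω => (Y1f ω, X1f ω)) (measurable_Y1f.prodMk measurable_X1f)
    (fun p => (p.1, p.2.1)) (measurable_fst.prodMk (measurable_fst.comp measurable_snd))
    (fun ω => rfl) (fun _ => (0:ℝ)) measurable_const
    (key_of_fibers (fun p => (p.1, p.2.1)) (fun _ => (0:ℝ)) fiber1)
  rwa [comap_pair Y1f X1f] at h

lemma cond3 : P6[Y4f | MeasurableSpace.comap Y1f inferInstance
      ⊔ MeasurableSpace.comap X1f inferInstance ⊔ MeasurableSpace.comap X2f inferInstance]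
    =ᵐ[P6] fun ω => if X1f ω ≠ X2f ω then Y1f ω * X1f ω * X2f ω else (1/3) * Y1f ω := by
  have hψ3 : Measurable ψ3 := by
    unfold ψ3
    refine Measurable.ite ?_ ?_ ?_
    · exact (measurableSet_eq_fun (measurable_snd.comp measurable_fst) measurable_snd).compl
    · exact ((measurable_fst.comp measurable_fst).mul
        (measurable_snd.comp measurable_fst)).mul measurable_snd
    · exact measurable_const.mul (measurable_fst.comp measurable_fst)
  have h := cond_key (fun ω => ((Y1f ω, X1f ω), X2f ω))
    ((measurable_Y1f.prodMk measurable_X1f).prodMk measurable_X2f)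
    (fun p => ((p.1, p.2.1), p.2.2.1))
    ((measurable_fst.prodMk (measurable_fst.comp measurable_snd)).prodMk
      (measurable_fst.comp (measurable_snd.comp measurable_snd)))
    (fun ω => rfl) ψ3 hψ3
    (key_of_fibers (fun p => ((p.1, p.2.1), p.2.2.1)) ψ3 fiber3)
  rw [comap_pair (fun ω => (Y1f ω, X1f ω)) X2f, comap_pair Y1f X1f] at h
  exact h

lemma cond3_ne : ¬ (P6[Y4f | MeasurableSpace.comap Y1f inferInstance
      ⊔ MeasurableSpace.comap X1f inferInstance ⊔ MeasurableSpace.comap X2f inferInstance]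
    =ᵐ[P6] fun _ => (0:ℝ)) := by
  intro h0
  have hval : (fun ω => if X1f ω ≠ X2f ω then Y1f ω * X1f ω * X2f ω else (1/3) * Y1f ω)
      =ᵐ[P6] fun _ => (0:ℝ) := cond3.symm.trans h0
  have pm : ∀ x y : ℝ, (x = 1 ∨ x = -1) → (y = 1 ∨ y = -1) → (x*y = 1 ∨ x*y = -1) := by
    rintro x y (rfl|rfl) (rfl|rfl) <;> norm_num
  have hF : ∀ᵐ ω ∂P6, False := by
    filter_upwards [hval, ae_good] with ω hv hg
    obtain ⟨ha, hb, hc, hd⟩ := hg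
    have hY1 : Y1f ω = 1 ∨ Y1f ω = -1 := pm _ _ ha hb
    have hX1 : X1f ω = 1 ∨ X1f ω = -1 := by
      unfold X1f; split_ifs
      · exact pm _ _ hb hc
      · exact pm _ _ hc hd
    have hX2 : X2f ω = 1 ∨ X2f ω = -1 := by
      unfold X2f; split_ifs
      · exact pm _ _ hb hc
      · exact pm _ _ hc hd
    by_cases hne : X1f ω ≠ X2f ω
    · rw [if_pos hne] at hv
      rcases hY1 with h|h <;> rcases hX1 with h'|h' <;> rcases hX2 with h''|h'' <;>
        rw [h, h', h''] at hv <;> norm_num at hv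
    · rw [if_neg hne] at hv
      rcases hY1 with h|h <;> rw [h] at hv <;> norm_num at hv
  have h1 : P6 {ω : Ω6 | ¬ False} = 0 := ae_iff.mp hF
  rw [show {ω : Ω6 | ¬ False} = Set.univ by simp, measure_univ] at h1
  exact one_ne_zero h1

end Kurtz31

open Kurtz31 in
/-- Example 3.1 of Kurtz: partial compatibility does not imply joint partial
compatibility.  With `Y = (ζ1ζ2, ζ2ζ3, ζ3ζ4, ζ4ζ1)` for i.i.d. Rademacher `ζi`,
`F^Y = σ(Y1)`, `X = 1_{ξ<1/2}Y2 + 1_{ξ≥1/2}Y3` and `h0(Y) = Y4`, one has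
`E[h0(Y)|σ(Y1) ∨ σ(X)] = 0 = E[h0(Y)|σ(Y1)]`, but for two independent copies
`X1, X2`, `E[h0(Y)|σ(Y1) ∨ σ(X1) ∨ σ(X2)] = 1_{X1≠X2}Y1X1X2 + (1/3)1_{X1=X2}Y1 ≠ 0`. -/
theorem stmt14 :
    ∃ (Ω : Type) (mΩ : MeasurableSpace Ω) (P : Measure Ω) (_ : IsProbabilityMeasure P)
      (ζ1 ζ2 ζ3 ζ4 ξ1 ξ2 : Ω → ℝ),
      Measurable ζ1 ∧ Measurable ζ2 ∧ Measurable ζ3 ∧ Measurable ζ4 ∧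
      Measurable ξ1 ∧ Measurable ξ2 ∧
      -- ζ1,…,ζ4 i.i.d. Rademacher, ξ1, ξ2 uniform on [0,1], all mutually independent
      P.map (fun ω => (ζ1 ω, ζ2 ω, ζ3 ω, ζ4 ω, ξ1 ω, ξ2 ω)) =
        rademacher.prod (rademacher.prod (rademacher.prod (rademacher.prod
          (unif01.prod unif01)))) ∧
      -- with the notation of the example:
      (let Y1 : Ω → ℝ := fun ω => ζ1 ω * ζ2 ω
       let Y2 : Ω → ℝ := fun ω => ζ2 ω * ζ3 ω
       let Y3 : Ω → ℝ := fun ω => ζ3 ω * ζ4 ω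
       let Y4 : Ω → ℝ := fun ω => ζ4 ω * ζ1 ω
       let X1 : Ω → ℝ := fun ω => if ξ1 ω < 1/2 then Y2 ω else Y3 ω
       let X2 : Ω → ℝ := fun ω => if ξ2 ω < 1/2 then Y2 ω else Y3 ω
       -- partial compatibility of X1 with Y for H = {h0}, h0(Y) = Y4:
       (P[Y4|MeasurableSpace.comap Y1 inferInstance ⊔ MeasurableSpace.comap X1 inferInstance]
          =ᵐ[P] fun _ => (0:ℝ)) ∧
       (P[Y4|MeasurableSpace.comap Y1 inferInstance] =ᵐ[P] fun _ => (0:ℝ)) ∧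
       -- the explicit value of the jointly conditioned expectation:
       (P[Y4|MeasurableSpace.comap Y1 inferInstance ⊔ MeasurableSpace.comap X1 inferInstance
            ⊔ MeasurableSpace.comap X2 inferInstance]
          =ᵐ[P] fun ω => if X1 ω ≠ X2 ω then Y1 ω * X1 ω * X2 ω else (1/3) * Y1 ω) ∧
       -- hence joint partial compatibility fails:
       ¬ (P[Y4|MeasurableSpace.comap Y1 inferInstance ⊔ MeasurableSpace.comap X1 inferInstance
            ⊔ MeasurableSpace.comap X2 inferInstance]
          =ᵐ[P] fun _ => (0:ℝ))) := by
  refine ⟨ℝ × ℝ × ℝ × ℝ × ℝ × ℝ, inferInstance, P6, inferInstance,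
    (fun ω => ω.1), (fun ω => ω.2.1), (fun ω => ω.2.2.1), (fun ω => ω.2.2.2.1),
    (fun ω => ω.2.2.2.2.1), (fun ω => ω.2.2.2.2.2),
    mz1, mz2, mz3, mz4, mz5, mz6, ?_, ?_⟩
  · rw [show (fun ω : Ω6 => (ω.1, ω.2.1, ω.2.2.1, ω.2.2.2.1, ω.2.2.2.2.1, ω.2.2.2.2.2))
        = id from rfl, Measure.map_id]
    rfl
  · exact ⟨cond2, cond1, cond3, cond3_ne⟩
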